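/- Let r : ℂ × ℝ → ℝ and F : ℂ × ℝ → ℂ be functions differentiable in the second (time) variable, and for each t define X(·, t) : ℂ → ℝ³ by X = (x¹, x², x³) with x¹ + i x² = [2(F − F̄·ξ²) + 2ξ(1 + ξξ̄)·r]/(1 + ξξ̄)² and x³ = [−2(F·ξ̄ + F̄·ξ) + (1 − ξ²ξ̄²)·r]/(1 + ξξ̄)², and let n(ξ) = (2 Re ξ, 2 Im ξ, 1 − ξξ̄)/(1 + ξξ̄) ∈ ℝ³. Then ⟨∂X/∂t(ξ, t), n(ξ)⟩ = ∂r/∂t(ξ, t) for all (ξ, t). In particular, if the support function evolves by ∂r/∂t = −𝒦 for a given function 𝒦, then the normal component of ∂X/∂t equals −𝒦·n(ξ). -/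

import Mathlib

open scoped RealInnerProductSpace

/-- The surface reconstructed in Gauss coordinates from the support function `r`
and the complex function `F`: its first two components satisfy
`x¹ + i x² = [2(F − F̄ξ²) + 2ξ(1+ξξ̄)r]/(1+ξξ̄)²` and its third component is
`x³ = [−2(Fξ̄ + F̄ξ) + (1−ξ²ξ̄²)r]/(1+ξξ̄)²`. -/
noncomputable def Xsurf (r : ℂ → ℝ) (F : ℂ → ℂ) (ξ : ℂ) : EuclideanSpace ℝ (Fin 3) :=
  let A : ℂ := (2 * (F ξ - (starRingEnd ℂ) (F ξ) * ξ ^ 2) +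
      2 * ξ * (1 + ξ * (starRingEnd ℂ) ξ) * (r ξ : ℂ)) / (1 + ξ * (starRingEnd ℂ) ξ) ^ 2
  let B : ℂ := (-2 * (F ξ * (starRingEnd ℂ) ξ + (starRingEnd ℂ) (F ξ) * ξ) +
      (1 - ξ ^ 2 * ((starRingEnd ℂ) ξ) ^ 2) * (r ξ : ℂ)) / (1 + ξ * (starRingEnd ℂ) ξ) ^ 2
  WithLp.toLp 2 ![A.re, A.im, B.re]

/-- The unit normal direction `n(ξ) = (2 Re ξ, 2 Im ξ, 1 − ξξ̄)/(1 + ξξ̄)`. -/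
noncomputable def nvec (ξ : ℂ) : EuclideanSpace ℝ (Fin 3) :=
  WithLp.toLp 2 ![2 * ξ.re / (1 + Complex.normSq ξ), 2 * ξ.im / (1 + Complex.normSq ξ),
    (1 - Complex.normSq ξ) / (1 + Complex.normSq ξ)]

noncomputable def Acx (ξ : ℂ) (ρ : ℝ) (f : ℂ) : ℂ :=
  (2 * (f - (starRingEnd ℂ) f * ξ ^ 2) +
      2 * ξ * (1 + ξ * (starRingEnd ℂ) ξ) * (ρ : ℂ)) / (1 + ξ * (starRingEnd ℂ) ξ) ^ 2

noncomputable def Bcx (ξ : ℂ) (ρ : ℝ) (f : ℂ) : ℂ :=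
  (-2 * (f * (starRingEnd ℂ) ξ + (starRingEnd ℂ) f * ξ) +
      (1 - ξ ^ 2 * ((starRingEnd ℂ) ξ) ^ 2) * (ρ : ℂ)) / (1 + ξ * (starRingEnd ℂ) ξ) ^ 2

lemma hasDerivAt_Acx {ρ : ℝ → ℝ} {f : ℝ → ℂ} {ρ' : ℝ} {f' : ℂ} {t : ℝ} (ξ : ℂ)
    (hρ : HasDerivAt ρ ρ' t) (hf : HasDerivAt f f' t) :
    HasDerivAt (fun τ => Acx ξ (ρ τ) (f τ)) (Acx ξ ρ' f') t := by
  have hconj : HasDerivAt (fun τ => (starRingEnd ℂ) (f τ)) ((starRingEnd ℂ) f') t := by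
    exact (Complex.conjCLE.toContinuousLinearMap.hasFDerivAt.comp_hasDerivAt t hf)
  have hreal : HasDerivAt (fun τ => ((ρ τ : ℝ) : ℂ)) ((ρ' : ℝ) : ℂ) t := by
    exact (Complex.ofRealCLM.hasFDerivAt.comp_hasDerivAt t hρ)
  exact (((hf.sub (hconj.mul_const (ξ ^ 2))).const_mul (2:ℂ)).add
      (hreal.const_mul (2 * ξ * (1 + ξ * (starRingEnd ℂ) ξ)))).div_const
        ((1 + ξ * (starRingEnd ℂ) ξ) ^ 2)

lemma hasDerivAt_Bcx {ρ : ℝ → ℝ} {f : ℝ → ℂ} {ρ' : ℝ} {f' : ℂ} {t : ℝ} (ξ : ℂ)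
    (hρ : HasDerivAt ρ ρ' t) (hf : HasDerivAt f f' t) :
    HasDerivAt (fun τ => Bcx ξ (ρ τ) (f τ)) (Bcx ξ ρ' f') t := by
  have hconj : HasDerivAt (fun τ => (starRingEnd ℂ) (f τ)) ((starRingEnd ℂ) f') t := by
    exact (Complex.conjCLE.toContinuousLinearMap.hasFDerivAt.comp_hasDerivAt t hf)
  have hreal : HasDerivAt (fun τ => ((ρ τ : ℝ) : ℂ)) ((ρ' : ℝ) : ℂ) t := by
    exact (Complex.ofRealCLM.hasFDerivAt.comp_hasDerivAt t hρ)
  exact ((((hf.mul_const ((starRingEnd ℂ) ξ)).add (hconj.mul_const ξ)).const_mul (-2:ℂ)).add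
      (hreal.const_mul (1 - ξ ^ 2 * ((starRingEnd ℂ) ξ) ^ 2))).div_const
        ((1 + ξ * (starRingEnd ℂ) ξ) ^ 2)

set_option maxRecDepth 4000 in
lemma key_identity (ξ : ℂ) (ρ : ℝ) (f : ℂ) :
    (Acx ξ ρ f).re * (2 * ξ.re / (1 + Complex.normSq ξ))
    + (Acx ξ ρ f).im * (2 * ξ.im / (1 + Complex.normSq ξ))
    + (Bcx ξ ρ f).re * ((1 - Complex.normSq ξ) / (1 + Complex.normSq ξ)) = ρ := by
  have hs : (0:ℝ) < 1 + Complex.normSq ξ := by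
    have := Complex.normSq_nonneg ξ; linarith
  have hd : (1 + ξ * (starRingEnd ℂ) ξ) = ((1 + Complex.normSq ξ : ℝ) : ℂ) := by
    rw [Complex.mul_conj]; push_cast; ring
  rw [Acx, Bcx, hd, ← Complex.ofReal_pow, Complex.div_ofReal_re, Complex.div_ofReal_im,
    Complex.div_ofReal_re]
  obtain ⟨a, b⟩ := ξ
  obtain ⟨u, v⟩ := f
  simp only [Complex.normSq_mk, Complex.mul_re, Complex.mul_im, Complex.add_re,
    Complex.add_im, Complex.sub_re, Complex.sub_im, Complex.one_re, Complex.one_im,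
    Complex.ofReal_re, Complex.ofReal_im, Complex.neg_re, Complex.neg_im,
    Complex.conj_re, Complex.conj_im, pow_two, Complex.re_ofNat, Complex.im_ofNat]
  have hs' : (1 + (a * a + b * b)) ≠ 0 := by nlinarith
  field_simp
  ring

/-- Under a time-dependent family of surfaces given in Gauss coordinates by the
support function `r(ξ,t)` and `F(ξ,t)`, the normal component of `∂X/∂t` equals
`∂r/∂t`; in particular, if `∂r/∂t = −𝒦` then the normal component of `∂X/∂t`
equals `−𝒦·n(ξ)`. -/
theorem support_function_flow (r : ℂ → ℝ → ℝ) (F : ℂ → ℝ → ℂ)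
    (hr : ∀ ξ : ℂ, Differentiable ℝ (r ξ)) (hF : ∀ ξ : ℂ, Differentiable ℝ (F ξ)) :
    (∀ (ξ : ℂ) (t : ℝ),
      ⟪deriv (fun τ => Xsurf (fun z => r z τ) (fun z => F z τ) ξ) t, nvec ξ⟫
        = deriv (r ξ) t) ∧
    (∀ 𝒦 : ℂ → ℝ → ℝ, (∀ (ξ : ℂ) (t : ℝ), deriv (r ξ) t = -𝒦 ξ t) →
      ∀ (ξ : ℂ) (t : ℝ),
        (⟪deriv (fun τ => Xsurf (fun z => r z τ) (fun z => F z τ) ξ) t, nvec ξ⟫ : ℝ) • nvec ξ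
          = (-𝒦 ξ t) • nvec ξ) := by
  have main : ∀ (ξ : ℂ) (t : ℝ),
      ⟪deriv (fun τ => Xsurf (fun z => r z τ) (fun z => F z τ) ξ) t, nvec ξ⟫
        = deriv (r ξ) t := by
    intro ξ t
    have hρ : HasDerivAt (r ξ) (deriv (r ξ) t) t := ((hr ξ) t).hasDerivAt
    have hf : HasDerivAt (F ξ) (deriv (F ξ) t) t := ((hF ξ) t).hasDerivAt
    set ρ' := deriv (r ξ) t
    set f' := deriv (F ξ) t
    have hA := hasDerivAt_Acx ξ hρ hf
    have hB := hasDerivAt_Bcx ξ hρ hf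
    have hg : HasDerivAt
        (fun τ => (![(Acx ξ (r ξ τ) (F ξ τ)).re, (Acx ξ (r ξ τ) (F ξ τ)).im,
          (Bcx ξ (r ξ τ) (F ξ τ)).re] : Fin 3 → ℝ))
        (![(Acx ξ ρ' f').re, (Acx ξ ρ' f').im, (Bcx ξ ρ' f').re]) t := by
      rw [hasDerivAt_pi]
      intro i
      fin_cases i
      · exact Complex.reCLM.hasFDerivAt.comp_hasDerivAt t hA
      · exact Complex.imCLM.hasFDerivAt.comp_hasDerivAt t hA
      · exact Complex.reCLM.hasFDerivAt.comp_hasDerivAt t hB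
    have hX : HasDerivAt (fun τ => Xsurf (fun z => r z τ) (fun z => F z τ) ξ)
        ((EuclideanSpace.equiv (Fin 3) ℝ).symm
          ![(Acx ξ ρ' f').re, (Acx ξ ρ' f').im, (Bcx ξ ρ' f').re]) t :=
      (EuclideanSpace.equiv (Fin 3) ℝ).symm.toContinuousLinearMap.hasFDerivAt.comp_hasDerivAt t hg
    rw [hX.deriv]
    have hv : ((EuclideanSpace.equiv (Fin 3) ℝ).symm
        ![(Acx ξ ρ' f').re, (Acx ξ ρ' f').im, (Bcx ξ ρ' f').re] : EuclideanSpace ℝ (Fin 3))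
        = WithLp.toLp 2 ![(Acx ξ ρ' f').re, (Acx ξ ρ' f').im, (Bcx ξ ρ' f').re] := rfl
    rw [hv]
    have := key_identity ξ ρ' f'
    simp only [nvec, PiLp.inner_apply, PiLp.toLp_apply, RCLike.inner_apply, conj_trivial, Fin.sum_univ_three,
      Matrix.cons_val_zero, Matrix.cons_val_one, Matrix.head_cons, Matrix.cons_val_two,
      Matrix.tail_cons]
    linarith [key_identity ξ ρ' f']
  exact ⟨main, fun 𝒦 h𝒦 ξ t => by rw [main ξ t, h𝒦 ξ t]⟩
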